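/- Let X be a compact metric space with metric d and f : X → X Lipschitz with constant L = Lip_d(f). Then the topological entropy satisfies h_top(f) ≤ HD_d(X) · max(log L, 0), where HD_d(X) denotes the Hausdorff dimension of (X, d). -/

import Mathlib

open Dynamics
open scoped NNReal ENNReal

section Stmt11Aux
open Set Filter MeasureTheory Uniformity
open scoped SetRel

lemma real_rpow_add_le {a b : ℝ} (ha : 0 ≤ a) (hb : 0 ≤ b) {s : ℝ} (hs : 0 ≤ s) :
    (a + b) ^ s ≤ 2 ^ s * (a ^ s + b ^ s) := by
  calc (a + b) ^ s ≤ (2 * max a b) ^ s := by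
        apply Real.rpow_le_rpow (by positivity) _ hs
        rw [two_mul]
        exact add_le_add (le_max_left a b) (le_max_right a b)
    _ = 2 ^ s * max a b ^ s := Real.mul_rpow (by norm_num) (le_max_of_le_left ha)
    _ ≤ 2 ^ s * (a ^ s + b ^ s) := by
        gcongr
        rcases max_cases a b with ⟨h, _⟩ | ⟨h, _⟩ <;> rw [h]
        · exact le_add_of_nonneg_right (Real.rpow_nonneg hb s)
        · exact le_add_of_nonneg_left (Real.rpow_nonneg ha s)

lemma coverA {X : Type*} [MetricSpace X] [CompactSpace X] [MeasurableSpace X] [BorelSpace X]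
    {s : ℝ} (hs : 0 < s)
    (hμ : μH[s] (univ : Set X) = 0) {ε b : ℝ} (hε : 0 < ε) (hb : 0 < b) :
    ∃ (I : Finset ℕ) (u : ℕ → Set X) (d : ℕ → ℝ),
      (∀ i, 0 < d i ∧ d i ≤ ε) ∧ (∀ i, IsOpen (u i)) ∧
      (∀ i, EMetric.diam (u i) ≤ ENNReal.ofReal (d i)) ∧
      ((univ : Set X) ⊆ ⋃ i ∈ I, u i) ∧ ∑ i ∈ I, (d i) ^ s ≤ b := by
  classical
  set b2 : ℝ := b * 2 ^ (-s) / 8 with hb2def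
  have h2s : (0:ℝ) < 2 ^ (-s) := Real.rpow_pos_of_pos (by norm_num) _
  have hb2 : 0 < b2 := by positivity
  -- extract a countable cover with small `∑ diam^s`
  rw [MeasureTheory.Measure.hausdorffMeasure_apply] at hμ
  have hinf : (⨅ (t : ℕ → Set X) (_ : univ ⊆ ⋃ n, t n)
      (_ : ∀ n, EMetric.diam (t n) ≤ ENNReal.ofReal (ε/2)),
      ∑' n, ⨆ _ : (t n).Nonempty, EMetric.diam (t n) ^ s) = 0 := by
    refine le_antisymm ?_ zero_le
    rw [← hμ]
    exact le_iSup₂ (f := fun r (_ : 0 < r) => ⨅ (t : ℕ → Set X) (_ : univ ⊆ ⋃ n, t n)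
      (_ : ∀ n, EMetric.diam (t n) ≤ r),
      ∑' n, ⨆ _ : (t n).Nonempty, EMetric.diam (t n) ^ s)
      (ENNReal.ofReal (ε/2)) (by simp [hε, half_pos])
  have hδ0 : (0:ℝ≥0∞) < ENNReal.ofReal (4 * b2) := by
    rw [ENNReal.ofReal_pos]; positivity
  rw [← hinf] at hδ0
  simp only [iInf_lt_iff] at hδ0
  obtain ⟨t, htcov, htdiam, htsum⟩ := hδ0
  have htsum' : ∑' n, EMetric.diam (t n) ^ s ≤ ENNReal.ofReal (4 * b2) := by
    refine le_trans (ENNReal.tsum_le_tsum fun n => ?_) htsum.le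
    rcases eq_empty_or_nonempty (t n) with h | h
    · simp [h, ENNReal.zero_rpow_of_pos hs, EMetric.diam]
    · simp [h]
  -- the thickening radii
  set g : ℕ → ℝ := fun i => b2 * (1/2) ^ i with hgdef
  have hc : ∀ i : ℕ, (0:ℝ) < g i := fun i => by rw [hgdef]; positivity
  set η : ℕ → ℝ := fun i => min (ε/8) ((g i) ^ (1/s) / 2) with hηdef
  have hη : ∀ i, 0 < η i := fun i => lt_min (by positivity)
    (by have := Real.rpow_pos_of_pos (hc i) (1/s); positivity)
  have hη8 : ∀ i, η i ≤ ε/8 := fun i => min_le_left _ _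
  have hηs : ∀ i, (2 * η i) ^ s ≤ g i := by
    intro i
    have h1 : 2 * η i ≤ (g i) ^ (1/s) := by
      calc 2 * η i ≤ 2 * ((g i) ^ (1/s) / 2) := by
            have := min_le_right (ε/8) ((g i) ^ (1/s) / 2); nlinarith [hη i]
        _ = (g i) ^ (1/s) := by ring
    calc (2 * η i) ^ s ≤ ((g i) ^ (1/s)) ^ s :=
          Real.rpow_le_rpow (by positivity) h1 hs.le
      _ = g i := by
          rw [one_div, Real.rpow_inv_rpow (hc i).le hs.ne']
  set u : ℕ → Set X := fun i => Metric.thickening (η i) (t i) with hudef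
  set d : ℕ → ℝ := fun i => (EMetric.diam (t i)).toReal + 2 * η i with hddef
  have hdiamfin : ∀ i, EMetric.diam (t i) ≠ ⊤ :=
    fun i => ((htdiam i).trans_lt ENNReal.ofReal_lt_top).ne
  have hdiamreal : ∀ i, (EMetric.diam (t i)).toReal ≤ ε/2 := fun i => by
    rw [← ENNReal.toReal_ofReal (by positivity : (0:ℝ) ≤ ε/2)]
    exact ENNReal.toReal_mono ENNReal.ofReal_ne_top (htdiam i)
  have hcov : (univ : Set X) ⊆ ⋃ i, u i := fun x hx => by
    obtain ⟨i, hi⟩ := mem_iUnion.mp (htcov hx)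
    exact mem_iUnion.mpr ⟨i, Metric.self_subset_thickening (hη i) _ hi⟩
  obtain ⟨I, hI⟩ := isCompact_univ.elim_finite_subcover u
    (fun i => Metric.isOpen_thickening) hcov
  refine ⟨I, u, d, fun i => ⟨by positivity, ?_⟩, fun i => Metric.isOpen_thickening,
    fun i => ?_, hI, ?_⟩
  · have hdi : d i = (EMetric.diam (t i)).toReal + 2 * η i := rfl
    have := hdiamreal i; have := hη8 i; linarith [hη i]
  · -- diam bound
    have h1 : u i = Metric.thickening ((η i).toNNReal : ℝ) (t i) := by
      rw [Real.coe_toNNReal _ (hη i).le]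
    rw [h1]
    refine (Metric.ediam_thickening_le _).trans ?_
    have : ENNReal.ofReal (d i) = EMetric.diam (t i) + ENNReal.ofReal (2 * η i) := by
      rw [hddef, ENNReal.ofReal_add ENNReal.toReal_nonneg (by positivity),
        ENNReal.ofReal_toReal (hdiamfin i)]
    rw [this]
    gcongr
    · exact le_rfl
    have h2 : (2:ℝ≥0∞) * ((η i).toNNReal : ℝ≥0∞) = ENNReal.ofReal (2 * η i) := by
      calc (2:ℝ≥0∞) * ((η i).toNNReal : ℝ≥0∞) = ENNReal.ofReal 2 * ENNReal.ofReal (η i) := by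
            rw [ENNReal.ofReal_ofNat]; rfl
        _ = ENNReal.ofReal (2 * η i) := (ENNReal.ofReal_mul (by norm_num)).symm
    rw [h2]
  · -- the sum bound
    have key : ∀ i, d i ^ s ≤ 2 ^ s * ((EMetric.diam (t i)).toReal ^ s + (2 * η i) ^ s) :=
      fun i => real_rpow_add_le ENNReal.toReal_nonneg (by positivity) hs.le
    have sum1 : ∑ i ∈ I, (EMetric.diam (t i)).toReal ^ s ≤ 4 * b2 := by
      have e1 : ∀ i, (EMetric.diam (t i)).toReal ^ s = (EMetric.diam (t i) ^ s).toReal :=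
        fun i => ENNReal.toReal_rpow _ _
      have e2 : ∑ i ∈ I, EMetric.diam (t i) ^ s ≤ ENNReal.ofReal (4 * b2) :=
        le_trans (ENNReal.sum_le_tsum I) htsum'
      calc ∑ i ∈ I, (EMetric.diam (t i)).toReal ^ s
          = (∑ i ∈ I, EMetric.diam (t i) ^ s).toReal := by
            rw [ENNReal.toReal_sum]
            · exact Finset.sum_congr rfl fun i _ => e1 i
            · intro i _
              exact (lt_of_le_of_lt (le_trans (ENNReal.le_tsum i) htsum')
                ENNReal.ofReal_lt_top).ne
        _ ≤ (ENNReal.ofReal (4 * b2)).toReal :=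
            ENNReal.toReal_mono ENNReal.ofReal_ne_top e2
        _ = 4 * b2 := ENNReal.toReal_ofReal (by positivity)
    have sum2 : ∑ i ∈ I, (2 * η i) ^ s ≤ 2 * b2 := by
      have hsummable : Summable g := by
        rw [hgdef]
        exact Summable.mul_left b2
          (summable_geometric_of_lt_one (r := 1/2) (by norm_num) (by norm_num))
      calc ∑ i ∈ I, (2 * η i) ^ s ≤ ∑ i ∈ I, g i :=
            Finset.sum_le_sum fun i _ => hηs i
        _ ≤ ∑' i : ℕ, g i :=
            Summable.sum_le_tsum I (fun i _ => (hc i).le) hsummable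
        _ = b2 * 2 := by
            rw [hgdef, tsum_mul_left,
              tsum_geometric_of_lt_one (r := 1/2) (by norm_num) (by norm_num)]
            norm_num
        _ = 2 * b2 := by ring
    have h2s' : (2:ℝ) ^ (-s) * 2 ^ s = 1 := by
      rw [← Real.rpow_add (by norm_num)]; simp
    calc ∑ i ∈ I, d i ^ s ≤ ∑ i ∈ I, 2 ^ s * ((EMetric.diam (t i)).toReal ^ s + (2 * η i) ^ s) :=
          Finset.sum_le_sum fun i _ => key i
      _ = 2 ^ s * (∑ i ∈ I, (EMetric.diam (t i)).toReal ^ s + ∑ i ∈ I, (2 * η i) ^ s) := by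
          rw [← Finset.mul_sum, Finset.sum_add_distrib]
      _ ≤ 2 ^ s * (4 * b2 + 2 * b2) := by
          have h2pos : (0:ℝ) < 2 ^ s := Real.rpow_pos_of_pos (by norm_num) _
          apply mul_le_mul_of_nonneg_left _ h2pos.le
          exact add_le_add sum1 sum2
      _ ≤ b := by
          have h2pos : (0:ℝ) < 2 ^ s := Real.rpow_pos_of_pos (by norm_num) _
          rw [hb2def]
          nlinarith [h2s']

lemma rpow_finset_sum {α : Type*} {x : ℝ} (hx : 0 < x) (s : Finset α) (e : α → ℝ) :
    x ^ (∑ i ∈ s, e i) = ∏ i ∈ s, x ^ e i := by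
  classical
  induction s using Finset.induction with
  | empty => simp
  | insert a s' hni ih =>
                     rw [Finset.sum_insert hni, Finset.prod_insert hni, Real.rpow_add hx, ih]

lemma half_geom_sum_le_one (n : ℕ) : ∑ k ∈ Finset.range n, ((1:ℝ)/2) ^ (k+1) ≤ 1 := by
  have key : ∀ m : ℕ, ∑ k ∈ Finset.range m, ((1:ℝ)/2) ^ (k+1) = 1 - (1/2)^m := by
    intro m
    induction m with
    | zero => simp
    | succ m ih => rw [Finset.sum_range_succ, ih, pow_succ]; ring
  rw [key n]
  have : (0:ℝ) ≤ (1/2)^n := by positivity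
  linarith

lemma coverB {X : Type*} [MetricSpace X] [Nonempty X] (f : X → X) {K : ℝ≥0}
    (hK : LipschitzWith K f) (hK1 : 1 < (K:ℝ)) {s ε : ℝ} (hs : 0 < s) (hε : 0 < ε)
    (I : Finset ℕ) (u : ℕ → Set X) (d : ℕ → ℝ)
    (hd : ∀ i, 0 < d i ∧ d i ≤ ε)
    (hdiam : ∀ i, EMetric.diam (u i) ≤ ENNReal.ofReal (d i))
    (hcov : (Set.univ : Set X) ⊆ ⋃ i ∈ I, u i)
    (hsum : ∑ i ∈ I, (d i / ε) ^ s ≤ 1/2) :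
    ∃ N : ℕ, ∀ n : ℕ, 1 ≤ n → ∃ t : Finset X,
      IsDynCoverOf f Set.univ {p : X × X | dist p.1 p.2 ≤ ε} n ↑t ∧
      (t.card : ℝ) ≤ (K:ℝ) ^ (s * (n + N)) := by
  classical
  have hKpos : (0:ℝ) < K := zero_lt_one.trans hK1
  -- escape times
  have hgrow : ∀ i : ℕ, ∃ m : ℕ, ¬((K:ℝ)^m * d i ≤ ε) := by
    intro i
    obtain ⟨m, hm⟩ := pow_unbounded_of_one_lt (ε / d i) hK1
    refine ⟨m, not_le.mpr ?_⟩
    rw [div_lt_iff₀ (hd i).1] at hm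
    linarith
  set nI : ℕ → ℕ := fun i => Nat.find (hgrow i) with hnIdef
  have hnIgt : ∀ i, ε < (K:ℝ)^(nI i) * d i := fun i => not_le.mp (Nat.find_spec (hgrow i))
  have hnIle : ∀ i, ∀ k < nI i, (K:ℝ)^k * d i ≤ ε :=
    fun i k hk => not_not.mp (Nat.find_min (hgrow i) hk)
  have hnI1 : ∀ i, 1 ≤ nI i := by
    intro i
    rcases Nat.eq_zero_or_pos (nI i) with h | h
    · exfalso
      have h2 := hnIgt i
      rw [h, pow_zero, one_mul] at h2
      linarith [(hd i).2]
    · exact h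
  -- within `u i`, orbits stay ε-close for `nI i` steps
  have claimU : ∀ i, ∀ x ∈ u i, ∀ y ∈ u i, ∀ q < nI i, dist (f^[q] x) (f^[q] y) ≤ ε := by
    intro i x hx y hy q hq
    have h1 : dist x y ≤ d i := by
      have h2 := (EMetric.edist_le_diam_of_mem hx hy).trans (hdiam i)
      exact (edist_le_ofReal (hd i).1.le).mp h2
    calc dist (f^[q] x) (f^[q] y) ≤ ((K^q : ℝ≥0) : ℝ) * dist x y := (hK.iterate q).dist_le_mul x y
      _ ≤ (K:ℝ)^q * d i := by
          push_cast
          have : (0:ℝ) ≤ (K:ℝ)^q := by positivity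
          nlinarith [dist_nonneg (x := x) (y := y)]
      _ ≤ ε := hnIle i q hq
  refine ⟨I.sup nI, ?_⟩
  intro n hn
  set N := I.sup nI with hNdef
  -- choice of covering set containing a point
  have hch : ∀ x : X, ∃ i, ∃ _ : i ∈ I, x ∈ u i := by
    intro x
    have := hcov (Set.mem_univ x)
    simpa only [Set.mem_iUnion] using this
  set c : X → {i : ℕ // i ∈ I} := fun x => ⟨(hch x).choose, (hch x).choose_spec.choose⟩
    with hcdef
  have hc : ∀ x, x ∈ u (c x).1 := fun x => (hch x).choose_spec.choose_spec
  -- itineraries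
  set z : X → ℕ → X := fun x j =>
    Nat.rec (motive := fun _ => X) x (fun _ p => f^[nI (c p).1] p) j with hzdef
  have hz0 : ∀ x, z x 0 = x := fun _ => rfl
  have hzs : ∀ x j, z x (j+1) = f^[nI (c (z x j)).1] (z x j) := fun _ _ => rfl
  set S : X → ℕ → ℕ := fun x j => ∑ j' ∈ Finset.range j, nI (c (z x j')).1 with hSdef
  have hS0 : ∀ x, S x 0 = 0 := fun x => by simp [hSdef]
  have hSs : ∀ x j, S x (j+1) = S x j + nI (c (z x j)).1 := fun x j => Finset.sum_range_succ _ j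
  have hzS : ∀ x j, z x j = f^[S x j] x := by
    intro x j
    induction j with
    | zero => rw [hz0, hS0]; rfl
    | succ j ih =>
        rw [hzs, hSs, add_comm (S x j), Function.iterate_add_apply, ih]
  have hSmono : ∀ x j, j ≤ S x j := by
    intro x j
    induction j with
    | zero => simp
    | succ j ih => rw [hSs]; have := hnI1 (c (z x j)).1; omega
  have hex : ∀ x : X, ∃ j, n ≤ S x (j+1) := fun x => ⟨n, le_trans (by omega) (hSmono x (n+1))⟩
  set k : X → ℕ := fun x => Nat.find (hex x) with hkdef
  have hk1 : ∀ x, n ≤ S x (k x + 1) := fun x => Nat.find_spec (hex x)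
  have hk2 : ∀ x, S x (k x) < n := by
    intro x
    rcases Nat.eq_zero_or_pos (k x) with h | h
    · rw [h, hS0]; omega
    · obtain ⟨j, hj⟩ := Nat.exists_eq_add_of_lt h
      have := Nat.find_min (hex x) (show j < k x by omega)
      rw [not_le] at this
      have hje : j + 1 = k x := by omega
      rw [← hje]
      exact this
  have hkn : ∀ x, k x < n := fun x => lt_of_le_of_lt (hSmono x (k x)) (hk2 x)
  -- word machinery
  have hXne : Nonempty X := inferInstance
  set i0 : {i : ℕ // i ∈ I} := c (Classical.arbitrary X) with hi0def
  set Gf : (Fin n → {i : ℕ // i ∈ I}) → ℕ → ℕ :=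
    fun g j => if h : j < n then nI (g ⟨j, h⟩).1 else 0 with hGfdef
  set Sg : (Fin n → {i : ℕ // i ∈ I}) → ℕ → ℕ :=
    fun g j => ∑ j' ∈ Finset.range j, Gf g j' with hSgdef
  set C : (Fin n → {i : ℕ // i ∈ I}) × Fin n → Set X := fun w =>
    {x | ∀ j : Fin n, (j:ℕ) ≤ (w.2:ℕ) → f^[Sg w.1 (j:ℕ)] x ∈ u (w.1 j).1} with hCdef
  set Q : (Fin n → {i : ℕ // i ∈ I}) × Fin n → Prop := fun w =>
    (∀ j : Fin n, (w.2:ℕ) < (j:ℕ) → w.1 j = i0) ∧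
    Sg w.1 (w.2:ℕ) < n ∧ n ≤ Sg w.1 ((w.2:ℕ)+1) with hQdef
  set P : Finset ((Fin n → {i : ℕ // i ∈ I}) × Fin n) :=
    Finset.univ.filter Q with hPdef
  -- basic facts about Sg
  have hSgsucc : ∀ g (j : ℕ) (hj : j < n), Sg g (j+1) = Sg g j + nI (g ⟨j, hj⟩).1 := by
    intro g j hj
    rw [hSgdef]
    simp only [Finset.sum_range_succ]
    rw [hGfdef]
    simp only [hj, dif_pos]
  -- separation: points in `C w` stay ε-close up to time n
  have claimSep : ∀ w, Q w → ∀ a ∈ C w, ∀ b ∈ C w, ∀ r < n,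
      dist (f^[r] a) (f^[r] b) ≤ ε := by
    intro w hQw a ha b hb r hr
    obtain ⟨g, k'⟩ := w
    set kk := (k' : ℕ) with hkkdef
    have hexj : ∃ j, r < Sg g (j + 1) := by
      refine ⟨kk, lt_of_lt_of_le hr ?_⟩
      exact hQw.2.2
    set j0 := Nat.find hexj with hj0def
    have hup : r < Sg g (j0 + 1) := Nat.find_spec hexj
    have hj0le : j0 ≤ kk := Nat.find_min' hexj (by exact lt_of_lt_of_le hr hQw.2.2)
    have hj0 : Sg g j0 ≤ r := by
      rcases Nat.eq_zero_or_pos j0 with h | h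
      · rw [h]; simp [hSgdef]
      · have h2 := Nat.find_min hexj (show j0 - 1 < j0 by omega)
        rw [not_lt] at h2
        have : j0 - 1 + 1 = j0 := by omega
        rwa [this] at h2
    have hj0n : j0 < n := lt_of_le_of_lt hj0le k'.2
    rw [hSgsucc g j0 hj0n] at hup
    set q := r - Sg g j0 with hqdef
    have hq : q < nI (g ⟨j0, hj0n⟩).1 := by omega
    have hrq : r = q + Sg g j0 := by omega
    have hmem : ∀ x ∈ C (g, k'), f^[Sg g j0] x ∈ u (g ⟨j0, hj0n⟩).1 := by
      intro x hx
      exact hx ⟨j0, hj0n⟩ (by simpa using hj0le)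
    rw [hrq, Function.iterate_add_apply, Function.iterate_add_apply]
    exact claimU _ _ (hmem a ha) _ (hmem b hb) q hq
  -- itinerary of a point gives a word in P whose cell contains it
  have hword : ∀ x : X, ∃ w, Q w ∧ x ∈ C w := by
    intro x
    set gx : Fin n → {i : ℕ // i ∈ I} :=
      fun j => if (j:ℕ) ≤ k x then c (z x (j:ℕ)) else i0 with hgxdef
    have hSg_eq : ∀ j : ℕ, j ≤ k x + 1 → Sg gx j = S x j := by
      intro j hj
      rw [hSgdef, hSdef]
      refine Finset.sum_congr rfl fun j' hj' => ?_
      rw [Finset.mem_range] at hj'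
      have hj'k : j' ≤ k x := by omega
      have hj'n : j' < n := lt_of_le_of_lt hj'k (hkn x)
      rw [hGfdef]
      simp only [hj'n, dif_pos]
      rw [hgxdef]
      simp only [hj'k, if_pos]
    refine ⟨(gx, ⟨k x, hkn x⟩), ⟨?_, ?_, ?_⟩, ?_⟩
    · intro j hj
      rw [hgxdef]
      simp only at hj ⊢
      rw [if_neg (by omega)]
    · simpa only [hSg_eq (k x) (by omega)] using hk2 x
    · simpa only [hSg_eq (k x + 1) (le_refl _)] using hk1 x
    · intro j hj
      simp only at hj
      have hjn : (j : ℕ) < n := j.2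
      rw [hSg_eq (j:ℕ) (by omega)]
      have : f^[S x (j:ℕ)] x = z x (j:ℕ) := (hzS x (j:ℕ)).symm
      rw [this, hgxdef]
      simp only [hj, if_pos]
      exact hc (z x (j:ℕ))
  -- the finite dynamical cover
  set pt : (Fin n → {i : ℕ // i ∈ I}) × Fin n → X := fun w =>
    if h : (C w).Nonempty then h.choose else Classical.arbitrary X with hptdef
  set t : Finset X := P.image pt with htdef
  have hdyncov : IsDynCoverOf f Set.univ {p : X × X | dist p.1 p.2 ≤ ε} n ↑t := by
    intro x _
    obtain ⟨w, hQw, hxC⟩ := hword x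
    have hne : (C w).Nonempty := ⟨x, hxC⟩
    have hptC : pt w ∈ C w := by
      rw [hptdef]
      simp only [hne, dif_pos]
      exact hne.choose_spec
    have hwP : w ∈ P := by
      rw [hPdef]
      simp only [Finset.mem_filter, Finset.mem_univ, true_and]
      exact hQw
    refine ⟨pt w, ?_, ?_⟩
    · rw [htdef]
      simp only [Finset.coe_image, Set.mem_image, Finset.mem_coe]
      exact ⟨w, hwP, rfl⟩
    · show (x, pt w) ∈ dynEntourage f {p : X × X | dist p.1 p.2 ≤ ε} n
      rw [mem_dynEntourage]
      intro r hr
      exact claimSep w hQw x hxC (pt w) hptC r hr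
  -- counting
  set wt : {i : ℕ // i ∈ I} → ℝ := fun i => (K:ℝ) ^ (-(nI i.1 : ℝ) * s) with hwtdef
  have hwt_pos : ∀ i, 0 < wt i := fun i => Real.rpow_pos_of_pos hKpos _
  have hwt_le : ∀ i, wt i ≤ (d i.1 / ε) ^ s := by
    intro i
    show (K:ℝ) ^ (-(nI i.1 : ℝ) * s) ≤ (d i.1 / ε) ^ s
    rw [Real.rpow_mul hKpos.le]
    apply Real.rpow_le_rpow (Real.rpow_nonneg hKpos.le _) _ hs.le
    rw [Real.rpow_neg hKpos.le, Real.rpow_natCast]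
    have h2 := hnIgt i.1
    have hp : (0:ℝ) < (K:ℝ) ^ (nI i.1) := by positivity
    rw [inv_eq_one_div, div_le_div_iff₀ hp hε]
    nlinarith
  have hwt_sum : ∑ i : {i : ℕ // i ∈ I}, wt i ≤ 1/2 := by
    calc ∑ i : {i : ℕ // i ∈ I}, wt i ≤ ∑ i : {i : ℕ // i ∈ I}, (d i.1 / ε) ^ s :=
          Finset.sum_le_sum fun i _ => hwt_le i
      _ = ∑ i ∈ I, (d i / ε) ^ s := Finset.sum_coe_sort I (fun i => (d i / ε) ^ s)
      _ ≤ 1/2 := hsum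
  set Wt : (Fin n → {i : ℕ // i ∈ I}) × Fin n → ℝ := fun w =>
    ∏ j : Fin n, (if (j:ℕ) ≤ (w.2:ℕ) then wt (w.1 j) else 1) with hWtdef
  -- each word in P has large weight
  have claim1 : ∀ w ∈ P, (1:ℝ) ≤ (K:ℝ) ^ (s * (n + N)) * Wt w := by
    intro w hw
    obtain ⟨g, k'⟩ := w
    have hQw : Q (g, k') := by
      rw [hPdef] at hw
      simpa only [Finset.mem_filter, Finset.mem_univ, true_and] using hw
    set kk := (k' : ℕ) with hkkdef
    -- rewrite the weight as a single power of K
    set F : ℕ → ℝ := fun j => if j ≤ kk then -((Gf g j : ℝ)) * s else 0 with hFdef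
    have hterm : ∀ j : Fin n, (if (j:ℕ) ≤ kk then wt (g j) else 1) = (K:ℝ) ^ F (j:ℕ) := by
      intro j
      rw [hFdef]
      by_cases hj : (j:ℕ) ≤ kk
      · simp only [hj, if_pos]
        show wt (g j) = (K:ℝ) ^ (-(Gf g (j:ℕ) : ℝ) * s)
        have : Gf g (j:ℕ) = nI (g j).1 := by
          rw [hGfdef]
          simp only [j.2, dif_pos, Fin.eta]
        rw [this]
      · simp only [hj, if_neg, not_false_iff]
        rw [Real.rpow_zero]
    have hWt_eq : Wt (g, k') = (K:ℝ) ^ (-((Sg g (kk+1) : ℝ)) * s) := by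
      show (∏ j : Fin n, (if (j:ℕ) ≤ kk then wt (g j) else 1)) = _
      calc (∏ j : Fin n, (if (j:ℕ) ≤ kk then wt (g j) else 1))
          = ∏ j : Fin n, (K:ℝ) ^ F (j:ℕ) := Finset.prod_congr rfl fun j _ => hterm j
        _ = ∏ j ∈ Finset.range n, (K:ℝ) ^ F j := Fin.prod_univ_eq_prod_range (fun j => (K:ℝ) ^ F j) n
        _ = (K:ℝ) ^ (∑ j ∈ Finset.range n, F j) := (rpow_finset_sum hKpos _ _).symm
        _ = (K:ℝ) ^ (-((Sg g (kk+1) : ℝ)) * s) := by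
            congr 1
            have hsub : ∑ j ∈ Finset.range n, F j = ∑ j ∈ Finset.range (kk+1), F j := by
              refine (Finset.sum_subset ?_ ?_).symm
              · exact Finset.range_subset_range.mpr (by have := k'.2; omega)
              · intro j _ hj
                rw [Finset.mem_range] at hj
                rw [hFdef]
                simp only [if_neg (by omega : ¬ j ≤ kk)]
            rw [hsub]
            have : ∀ j ∈ Finset.range (kk+1), F j = -((Gf g j : ℝ)) * s := by
              intro j hj
              rw [Finset.mem_range] at hj
              rw [hFdef]
              simp only [if_pos (by omega : j ≤ kk)]
            rw [Finset.sum_congr rfl this]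
            rw [hSgdef]
            push_cast
            rw [← Finset.sum_mul, ← Finset.sum_neg_distrib]
    rw [hWt_eq, ← Real.rpow_add hKpos]
    have hSgle : Sg g (kk+1) ≤ n + N := by
      have h1 : Sg g (kk+1) = Sg g kk + nI (g k').1 := by
        have := hSgsucc g kk k'.2
        simpa [Fin.eta] using this
      have h2 : nI (g k').1 ≤ N := by
        rw [hNdef]
        exact Finset.le_sup (g k').2
      have h3 : Sg g kk < n := hQw.2.1
      omega
    calc (1:ℝ) = (K:ℝ) ^ (0:ℝ) := (Real.rpow_zero _).symm
      _ ≤ (K:ℝ) ^ (s * (n + N) + -((Sg g (kk+1) : ℝ)) * s) := by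
          rw [Real.rpow_le_rpow_left_iff hK1]
          have : (Sg g (kk+1) : ℝ) ≤ (n:ℝ) + (N:ℝ) := by exact_mod_cast hSgle
          nlinarith
  -- total weight of P is at most one
  have claim2 : ∑ w ∈ P, Wt w ≤ 1 := by
    have hWt_nonneg : ∀ w, 0 ≤ Wt w := by
      intro w
      refine Finset.prod_nonneg fun j _ => ?_
      by_cases hj : (j:ℕ) ≤ (w.2:ℕ)
      · simp only [hj, if_pos]; exact (hwt_pos _).le
      · simp only [hj, if_neg, not_false_iff]; norm_num
    set P' : Finset ((Fin n → {i : ℕ // i ∈ I}) × Fin n) :=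
      Finset.univ.filter (fun w => ∀ j : Fin n, (w.2:ℕ) < (j:ℕ) → w.1 j = i0) with hP'def
    have hPP' : P ⊆ P' := by
      intro w hw
      rw [hPdef] at hw
      rw [hP'def]
      simp only [Finset.mem_filter, Finset.mem_univ, true_and] at hw ⊢
      exact hw.1
    have step1 : ∑ w ∈ P, Wt w ≤ ∑ w ∈ P', Wt w :=
      Finset.sum_le_sum_of_subset_of_nonneg hPP' (fun w _ _ => hWt_nonneg w)
    -- rewrite the sum over P' k'-slice by k'-slice
    have step2 : ∀ k' : Fin n,
        (∑ g ∈ Fintype.piFinset (fun j : Fin n =>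
          if (j:ℕ) ≤ (k':ℕ) then (Finset.univ : Finset {i : ℕ // i ∈ I}) else {i0}),
          Wt (g, k')) ≤ (1/2:ℝ) ^ ((k':ℕ)+1) := by
      intro k'
      have e1 : (∑ g ∈ Fintype.piFinset (fun j : Fin n =>
          if (j:ℕ) ≤ (k':ℕ) then (Finset.univ : Finset {i : ℕ // i ∈ I}) else {i0}),
          Wt (g, k'))
          = ∏ j : Fin n, ∑ a ∈ (if (j:ℕ) ≤ (k':ℕ) then (Finset.univ : Finset {i : ℕ // i ∈ I})
              else {i0}), (if (j:ℕ) ≤ (k':ℕ) then wt a else 1) := by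
        rw [Finset.prod_univ_sum]
      rw [e1]
      have e2 : ∀ j : Fin n, (∑ a ∈ (if (j:ℕ) ≤ (k':ℕ)
          then (Finset.univ : Finset {i : ℕ // i ∈ I}) else {i0}),
          (if (j:ℕ) ≤ (k':ℕ) then wt a else 1))
          ≤ (if (j:ℕ) ≤ (k':ℕ) then (1/2:ℝ) else 1) := by
        intro j
        by_cases hj : (j:ℕ) ≤ (k':ℕ)
        · simp only [hj, if_pos]
          exact hwt_sum
        · simp only [hj, if_neg, not_false_iff, Finset.sum_singleton, le_refl]
      have e3 : (∏ j : Fin n, ∑ a ∈ (if (j:ℕ) ≤ (k':ℕ)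
          then (Finset.univ : Finset {i : ℕ // i ∈ I}) else {i0}),
          (if (j:ℕ) ≤ (k':ℕ) then wt a else 1))
          ≤ ∏ j : Fin n, (if (j:ℕ) ≤ (k':ℕ) then (1/2:ℝ) else 1) := by
        refine Finset.prod_le_prod (fun j _ => ?_) (fun j _ => e2 j)
        by_cases hj : (j:ℕ) ≤ (k':ℕ)
        · simp only [hj, if_pos]
          exact Finset.sum_nonneg fun a _ => (hwt_pos a).le
        · simp only [hj, if_neg, not_false_iff, Finset.sum_singleton]
          norm_num
      refine e3.trans ?_
      have e4 : (∏ j : Fin n, (if (j:ℕ) ≤ (k':ℕ) then (1/2:ℝ) else 1))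
          = (1/2:ℝ) ^ ((k':ℕ)+1) := by
        rw [Fin.prod_univ_eq_prod_range (fun j => if j ≤ (k':ℕ) then (1/2:ℝ) else 1) n]
        rw [← Finset.prod_filter]
        have : Finset.filter (fun j => j ≤ (k':ℕ)) (Finset.range n)
            = Finset.range ((k':ℕ)+1) := by
          ext j
          simp only [Finset.mem_filter, Finset.mem_range]
          have := k'.2
          omega
        rw [this, Finset.prod_const, Finset.card_range]
      rw [e4]
    -- slice decomposition
    have step3 : ∑ w ∈ P', Wt w = ∑ k' : Fin n,
        ∑ g ∈ Fintype.piFinset (fun j : Fin n =>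
          if (j:ℕ) ≤ (k':ℕ) then (Finset.univ : Finset {i : ℕ // i ∈ I}) else {i0}),
        Wt (g, k') := by
      rw [hP'def, Finset.sum_filter, Fintype.sum_prod_type_right]
      refine Finset.sum_congr rfl fun k' _ => ?_
      rw [← Finset.sum_filter]
      refine Finset.sum_congr ?_ fun _ _ => rfl
      ext g
      simp only [Finset.mem_filter, Finset.mem_univ, true_and, Fintype.mem_piFinset]
      constructor
      · intro h j
        by_cases hj : (j:ℕ) ≤ (k':ℕ)
        · simp [hj]
        · rw [if_neg hj, Finset.mem_singleton]
          exact h j (by omega)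
      · intro h j hj
        have h2 := h j
        rw [if_neg (by omega)] at h2
        simpa using h2
    calc ∑ w ∈ P, Wt w ≤ ∑ w ∈ P', Wt w := step1
      _ = ∑ k' : Fin n, ∑ g ∈ Fintype.piFinset (fun j : Fin n =>
            if (j:ℕ) ≤ (k':ℕ) then (Finset.univ : Finset {i : ℕ // i ∈ I}) else {i0}),
          Wt (g, k') := step3
      _ ≤ ∑ k' : Fin n, (1/2:ℝ) ^ ((k':ℕ)+1) := Finset.sum_le_sum fun k' _ => step2 k'
      _ = ∑ m ∈ Finset.range n, (1/2:ℝ) ^ (m+1) :=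
          Fin.sum_univ_eq_sum_range (fun m => (1/2:ℝ) ^ (m+1)) n
      _ ≤ 1 := half_geom_sum_le_one n
  -- conclude
  have hcard : (P.card : ℝ) ≤ (K:ℝ) ^ (s * (n + N)) := by
    have h1 : (P.card : ℝ) = ∑ _w ∈ P, (1:ℝ) := by simp
    calc (P.card : ℝ) = ∑ _w ∈ P, (1:ℝ) := h1
      _ ≤ ∑ w ∈ P, (K:ℝ) ^ (s * (n + N)) * Wt w := Finset.sum_le_sum claim1
      _ = (K:ℝ) ^ (s * (n + N)) * ∑ w ∈ P, Wt w := by rw [Finset.mul_sum]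
      _ ≤ (K:ℝ) ^ (s * (n + N)) * 1 := by
          exact mul_le_mul_of_nonneg_left claim2 (Real.rpow_nonneg hKpos.le _)
      _ = (K:ℝ) ^ (s * (n + N)) := mul_one _
  refine ⟨t, hdyncov, ?_⟩
  calc (t.card : ℝ) ≤ (P.card : ℝ) := by
        exact_mod_cast Nat.cast_le.mpr (Finset.card_image_le)
    _ ≤ (K:ℝ) ^ (s * (n + N)) := hcard

lemma coverC {X : Type*} [MetricSpace X] [CompactSpace X] [Nonempty X]
    [MeasurableSpace X] [BorelSpace X]
    (f : X → X) {K : ℝ≥0} (hK : LipschitzWith K f) (hK1 : 1 < (K:ℝ))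
    {s ε : ℝ} (hs : 0 < s) (hε : 0 < ε) (hμ : μH[s] (univ : Set X) = 0) :
    coverEntropyEntourage f Set.univ {p : X × X | dist p.1 p.2 ≤ ε}
      ≤ ((s * Real.log K : ℝ) : EReal) := by
  have hKpos : (0:ℝ) < K := zero_lt_one.trans hK1
  have hε2 : 0 < ε/2 := half_pos hε
  obtain ⟨I, u, d, hd, _hopen, hdiam, hcov, hsum⟩ :=
    coverA hs hμ hε2 (show (0:ℝ) < (ε/2)^s/2 by positivity)
  have hsum' : ∑ i ∈ I, (d i / (ε/2)) ^ s ≤ 1/2 := by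
    have e : ∀ i, (d i / (ε/2)) ^ s = d i ^ s / (ε/2)^s := fun i =>
      Real.div_rpow (hd i).1.le hε2.le s
    rw [Finset.sum_congr rfl fun i _ => e i, ← Finset.sum_div,
      div_le_iff₀ (by positivity : (0:ℝ) < (ε/2)^s)]
    linarith
  obtain ⟨N, hN⟩ := coverB f hK hK1 hs hε2 I u d hd hdiam hcov hsum'
  set V : Set (X × X) := {p : X × X | dist p.1 p.2 ≤ ε/2} with hVdef
  have hVsymm : SetRel.IsSymm V := ⟨fun a b h => by
    simp only [hVdef, Set.mem_setOf_eq] at h ⊢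
    rw [dist_comm]; exact h⟩
  have hVV : V ○ V ⊆ {p : X × X | dist p.1 p.2 ≤ ε} := by
    rintro ⟨x, y⟩ ⟨w, h1, h2⟩
    simp only [Set.mem_setOf_eq, hVdef] at h1 h2 ⊢
    calc dist x y ≤ dist x w + dist w y := dist_triangle _ _ _
      _ ≤ ε := by linarith
  have key : ∀ n : ℕ, 1 ≤ n → coverEntropyEntourage f Set.univ {p : X × X | dist p.1 p.2 ≤ ε}
      ≤ (((s * ((n:ℝ) + N) * Real.log K) / n : ℝ) : EReal) := by
    intro n hn
    obtain ⟨t, htc, htcard⟩ := hN n hn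
    have h1 : coverEntropyEntourage f Set.univ {p : X × X | dist p.1 p.2 ≤ ε}
        ≤ coverEntropyEntourage f Set.univ (V ○ V) :=
      coverEntropyEntourage_antitone f Set.univ hVV
    have h2 := coverEntropyEntourage_le_log_coverMincard_div (T := f) (F := Set.univ)
      (U := V) (Set.mapsTo_univ f Set.univ) (show n ≠ 0 by omega)
    have h3 : ((coverMincard f Set.univ V n : ℕ∞) : ℝ≥0∞)
        ≤ ENNReal.ofReal ((K:ℝ) ^ (s * ((n:ℝ) + N))) := by
      have ha : coverMincard f Set.univ V n ≤ (t.card : ℕ∞) := htc.coverMincard_le_card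
      have hb : ((coverMincard f Set.univ V n : ℕ∞) : ℝ≥0∞) ≤ ((t.card : ℕ) : ℝ≥0∞) := by
        exact_mod_cast ha
      refine hb.trans ?_
      rw [← ENNReal.ofReal_natCast]
      apply ENNReal.ofReal_le_ofReal
      calc ((t.card : ℕ) : ℝ) ≤ (K:ℝ) ^ (s * ((n:ℝ) + (N:ℝ))) := htcard
        _ = (K:ℝ) ^ (s * ((n:ℝ) + N)) := by norm_num
    have h4 : ((coverMincard f Set.univ V n : ℕ∞) : ℝ≥0∞).log
        ≤ ((s * ((n:ℝ) + N) * Real.log K : ℝ) : EReal) := by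
      refine (ENNReal.log_monotone h3).trans ?_
      rw [ENNReal.log_ofReal, if_neg (not_le.mpr (by positivity))]
      rw [Real.log_rpow hKpos]
    refine h1.trans (h2.trans ?_)
    calc ((coverMincard f Set.univ V n : ℕ∞) : ℝ≥0∞).log / (n : EReal)
        ≤ ((s * ((n:ℝ) + N) * Real.log K : ℝ) : EReal) / (n : EReal) :=
          EReal.div_le_div_right_of_nonneg (by exact_mod_cast Nat.zero_le n) h4
      _ = (((s * ((n:ℝ) + N) * Real.log K) / n : ℝ) : EReal) := by
          rw [EReal.coe_div]
          norm_cast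
  have hlim : Filter.Tendsto (fun n : ℕ => (((s * ((n:ℝ) + N) * Real.log K) / n : ℝ) : EReal))
      Filter.atTop (nhds ((s * Real.log K : ℝ) : EReal)) := by
    rw [EReal.tendsto_coe]
    have heq : ∀ᶠ n : ℕ in Filter.atTop,
        (s * ((n:ℝ) + N) * Real.log K) / n = s * Real.log K + (s * N * Real.log K) / n := by
      refine Filter.eventually_atTop.2 ⟨1, fun n hn => ?_⟩
      have hnpos : (0:ℝ) < n := by exact_mod_cast hn
      field_simp
    refine Filter.Tendsto.congr' (Filter.EventuallyEq.symm heq) ?_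
    have := tendsto_const_div_atTop_nhds_zero_nat (s * N * Real.log K)
    have h := Filter.Tendsto.const_add (s * Real.log K) this
    simpa using h
  exact ge_of_tendsto hlim (Filter.eventually_atTop.2 ⟨1, key⟩)

lemma coverD {X : Type*} [MetricSpace X] [CompactSpace X] [Nonempty X]
    (f : X → X) {K : ℝ≥0} (hK : LipschitzWith K f) (hK1 : (K:ℝ) ≤ 1) :
    coverEntropy f Set.univ ≤ 0 := by
  rw [coverEntropy_eq_iSup_basis Metric.uniformity_basis_dist_le f Set.univ]
  refine iSup₂_le fun ε hε => ?_
  set V : Set (X × X) := {p : X × X | dist p.1 p.2 ≤ ε/2} with hVdef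
  have hVuni : V ∈ uniformity X := Metric.uniformity_basis_dist_le.mem_of_mem (half_pos hε)
  have hVsymm : SetRel.IsSymm V := ⟨fun a b h => by
    simp only [hVdef, Set.mem_setOf_eq] at h ⊢
    rw [dist_comm]; exact h⟩
  have hVV : V ○ V ⊆ {p : X × X | dist p.1 p.2 ≤ ε} := by
    rintro ⟨x, y⟩ ⟨w, h1, h2⟩
    simp only [Set.mem_setOf_eq, hVdef] at h1 h2 ⊢
    calc dist x y ≤ dist x w + dist w y := dist_triangle _ _ _
      _ ≤ ε := by linarith
  obtain ⟨t0, ht0⟩ := exists_isDynCoverOf_of_isCompact_invariant isCompact_univ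
    (Set.mapsTo_univ f Set.univ) hVuni 1
  have htne : 0 < t0.card := by
    have := ht0.nonempty (Set.univ_nonempty)
    exact Finset.card_pos.mpr (by exact_mod_cast Finset.coe_nonempty.mp (by exact_mod_cast this))
  have hiter : ∀ n : ℕ, IsDynCoverOf f Set.univ V n ↑t0 := by
    intro n
    intro x hx
    have h1 := ht0 hx
    obtain ⟨y, hy, hxy⟩ := h1
    refine ⟨y, hy, ?_⟩
    have hdist : dist x y ≤ ε/2 := by
      have := hxy
      rw [show dynEntourage f V 1 = V from dynEntourage_one] at this
      exact this
    show (x, y) ∈ dynEntourage f V n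
    rw [mem_dynEntourage]
    intro k _
    show dist (f^[k] x) (f^[k] y) ≤ ε/2
    calc dist (f^[k] x) (f^[k] y) ≤ ((K^k : ℝ≥0) : ℝ) * dist x y :=
          (hK.iterate k).dist_le_mul x y
      _ ≤ 1 * (ε/2) := by
          push_cast
          have h1 : ((K:ℝ))^k ≤ 1 := pow_le_one₀ K.coe_nonneg hK1
          have h2 : (0:ℝ) ≤ (K:ℝ)^k := by positivity
          nlinarith [dist_nonneg (x := x) (y := y)]
      _ = ε/2 := one_mul _
  have key : ∀ n : ℕ, 1 ≤ n →
      coverEntropyEntourage f Set.univ {p : X × X | dist p.1 p.2 ≤ ε}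
        ≤ ((Real.log t0.card / n : ℝ) : EReal) := by
    intro n hn
    have h1 : coverEntropyEntourage f Set.univ {p : X × X | dist p.1 p.2 ≤ ε}
        ≤ coverEntropyEntourage f Set.univ (V ○ V) :=
      coverEntropyEntourage_antitone f Set.univ hVV
    have h2 := coverEntropyEntourage_le_log_coverMincard_div (T := f) (F := Set.univ)
      (U := V) (Set.mapsTo_univ f Set.univ) (show n ≠ 0 by omega)
    have h3 : ((coverMincard f Set.univ V n : ℕ∞) : ℝ≥0∞)
        ≤ ENNReal.ofReal (t0.card : ℝ) := by
      have ha : coverMincard f Set.univ V n ≤ (t0.card : ℕ∞) :=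
        (hiter n).coverMincard_le_card
      rw [ENNReal.ofReal_natCast]
      exact_mod_cast ha
    have h4 : ((coverMincard f Set.univ V n : ℕ∞) : ℝ≥0∞).log
        ≤ ((Real.log t0.card : ℝ) : EReal) := by
      refine (ENNReal.log_monotone h3).trans ?_
      rw [ENNReal.log_ofReal, if_neg (not_le.mpr (by exact_mod_cast htne))]
    refine h1.trans (h2.trans ?_)
    calc ((coverMincard f Set.univ V n : ℕ∞) : ℝ≥0∞).log / (n : EReal)
        ≤ ((Real.log t0.card : ℝ) : EReal) / (n : EReal) :=
          EReal.div_le_div_right_of_nonneg (by exact_mod_cast Nat.zero_le n) h4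
      _ = ((Real.log t0.card / n : ℝ) : EReal) := by
          rw [EReal.coe_div]
          norm_cast
  have hlim : Filter.Tendsto (fun n : ℕ => ((Real.log t0.card / n : ℝ) : EReal))
      Filter.atTop (nhds ((0 : ℝ) : EReal)) := by
    rw [EReal.tendsto_coe]
    exact tendsto_const_div_atTop_nhds_zero_nat _
  have := ge_of_tendsto hlim (Filter.eventually_atTop.2 ⟨1, key⟩)
  simpa using this

end Stmt11Aux

section Stmt11Main
open Set Filter MeasureTheory Uniformity

/-- For a Lipschitz self-map `f` of a compact metric space `X` with Lipschitz
constant `K`, the topological entropy satisfies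
`h_top(f) ≤ HD(X) · log⁺ K`. -/
theorem stmt11 {X : Type*} [MetricSpace X] [CompactSpace X]
    (f : X → X) (K : ℝ≥0) (hK : LipschitzWith K f) :
    coverEntropy f Set.univ ≤
      ((dimH (Set.univ : Set X) : EReal)) * ((max (Real.log K) 0 : ℝ) : EReal) := by
  borelize X
  rcases isEmpty_or_nonempty X with hE | hNE
  · have h : (Set.univ : Set X) = ∅ := Set.univ_eq_empty_iff.mpr hE
    rw [h, coverEntropy_empty]
    exact bot_le
  rcases le_or_gt (K:ℝ) 1 with hK1 | hK1
  · have h0 : max (Real.log K) 0 = 0 := max_eq_right (Real.log_nonpos K.coe_nonneg hK1)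
    rw [h0, EReal.coe_zero, mul_zero]
    exact coverD f hK hK1
  · have hlogpos : 0 < Real.log K := Real.log_pos hK1
    have hmax : max (Real.log K) 0 = Real.log K := max_eq_left hlogpos.le
    rw [hmax]
    rcases eq_or_ne (dimH (Set.univ : Set X)) ⊤ with hdim | hdim
    · rw [hdim, EReal.coe_ennreal_top, EReal.top_mul_of_pos (EReal.coe_pos.mpr hlogpos)]
      exact le_top
    · set D : ℝ := (dimH (Set.univ : Set X)).toReal with hD
      have hD0 : 0 ≤ D := ENNReal.toReal_nonneg
      have hDcoe : ((dimH (Set.univ : Set X)) : EReal) = ((D : ℝ) : EReal) := by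
        rw [hD, ← ENNReal.ofReal_toReal hdim, EReal.coe_ennreal_ofReal]
        rw [ENNReal.toReal_ofReal hD0]
        congr 1
        exact max_eq_left hD0
      rw [hDcoe, ← EReal.coe_mul]
      have key : ∀ m : ℕ, coverEntropy f Set.univ
          ≤ (((D + 1/((m:ℝ)+1)) * Real.log K : ℝ) : EReal) := by
        intro m
        set s : ℝ := D + 1/((m:ℝ)+1) with hsdef
        have hs : 0 < s := by positivity
        have hμ : μH[s] (Set.univ : Set X) = 0 := by
          have hsNN : ((s.toNNReal : ℝ≥0) : ℝ) = s := Real.coe_toNNReal s hs.le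
          have hlt : dimH (Set.univ : Set X) < (s.toNNReal : ℝ≥0∞) := by
            have h1 : dimH (Set.univ : Set X) = ENNReal.ofReal D := by
              rw [hD, ENNReal.ofReal_toReal hdim]
            have h2 : ((s.toNNReal : ℝ≥0) : ℝ≥0∞) = ENNReal.ofReal s := rfl
            rw [h1, h2]
            rw [ENNReal.ofReal_lt_ofReal_iff hs]
            rw [hsdef]
            have : (0:ℝ) < 1/((m:ℝ)+1) := by positivity
            linarith
          have := hausdorffMeasure_of_dimH_lt hlt
          rwa [hsNN] at this
        rw [coverEntropy_eq_iSup_basis Metric.uniformity_basis_dist_le f Set.univ]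
        exact iSup₂_le fun ε hε => coverC f hK hK1 hs hε hμ
      have hlim : Filter.Tendsto (fun m : ℕ => (((D + 1/((m:ℝ)+1)) * Real.log K : ℝ) : EReal))
          Filter.atTop (nhds ((D * Real.log K : ℝ) : EReal)) := by
        rw [EReal.tendsto_coe]
        have h1 : Filter.Tendsto (fun m : ℕ => D + 1/((m:ℝ)+1)) Filter.atTop (nhds D) := by
          have := tendsto_one_div_add_atTop_nhds_zero_nat (𝕜 := ℝ)
          have h2 := Filter.Tendsto.const_add D this
          simpa using h2
        have := Filter.Tendsto.mul_const (Real.log K) h1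
        simpa using this
      exact ge_of_tendsto hlim (Filter.Eventually.of_forall key)

end Stmt11Main
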